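/- Let λ, Γ, δ be real numbers with 0 < λ < 1, 0 < Γ < 1, 0 < δ < 1, set χ = λΓ + (1-λ)(1-δ) and ψ = λ(1-χ)/((1-λ)χ), and assume λ < χ < 1. Define π₀ = (χ-λ)/(1-δ), ε₀ = 0, ε₁ = (λ(1-Γ)/χ)·π₀, π₁ = (λ(1-δ(1-λ))/((1-λ)χ))·π₀, and for every k ≥ 2, ε_k = ψ^k·((1-λ)(1-Γ)/(1-χ)²)·π₀ and π_k = (λ/(1-λ))·ε_k. Then the series Σ_{k=0}^∞ (π_k + ε_k) converges and equals 1. -/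

import Mathlib

set_option maxHeartbeats 1000000
set_option maxRecDepth 8000


/-- The stationary probabilities of the feedback-scheme Markov chain
sum to one. -/
theorem stationary_distribution_sums_to_one
    (lam Γ δ χ ψ : ℝ)
    (hlam : 0 < lam) (hlam1 : lam < 1)
    (hΓ : 0 < Γ) (hΓ1 : Γ < 1)
    (hδ : 0 < δ) (hδ1 : δ < 1)
    (hχ : χ = lam * Γ + (1 - lam) * (1 - δ))
    (hψ : ψ = lam * (1 - χ) / ((1 - lam) * χ))
    (hstab : lam < χ) (hχ1 : χ < 1)
    (pi eps : ℕ → ℝ)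
    (hpi0 : pi 0 = (χ - lam) / (1 - δ))
    (heps0 : eps 0 = 0)
    (heps1 : eps 1 = (lam * (1 - Γ) / χ) * pi 0)
    (hpi1 : pi 1 = (lam * (1 - δ * (1 - lam)) / ((1 - lam) * χ)) * pi 0)
    (hepsk : ∀ k : ℕ, 2 ≤ k → eps k = ψ ^ k * ((1 - lam) * (1 - Γ) / (1 - χ) ^ 2) * pi 0)
    (hpik : ∀ k : ℕ, 2 ≤ k → pi k = (lam / (1 - lam)) * eps k) :
    HasSum (fun k : ℕ => pi k + eps k) 1 := by
  have hlam' : (1 : ℝ) - lam ≠ 0 := by nlinarith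
  have hχ0 : 0 < χ := lt_trans hlam hstab
  have hχ0' : χ ≠ 0 := ne_of_gt hχ0
  have hχ1' : (1 : ℝ) - χ ≠ 0 := by nlinarith
  have hδ' : (1 : ℝ) - δ ≠ 0 := by nlinarith
  have hψ0 : 0 ≤ ψ := by
    rw [hψ]; apply div_nonneg <;> nlinarith
  have hψ1 : ψ < 1 := by
    rw [hψ, div_lt_one (by nlinarith)]; nlinarith
  set C : ℝ := (lam / (1 - lam) + 1) * ((1 - lam) * (1 - Γ) / (1 - χ) ^ 2) * pi 0 with hC
  have geo : HasSum (fun k : ℕ => ψ ^ k * C) ((1 - ψ)⁻¹ * C) :=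
    (hasSum_geometric_of_lt_one hψ0 hψ1).mul_right C
  set h : ℕ → ℝ := fun k => (pi k + eps k) - ψ ^ k * C with hh
  have hzero : ∀ k ∉ ({0, 1} : Finset ℕ), h k = 0 := by
    intro k hk
    have h2 : 2 ≤ k := by
      simp only [Finset.mem_insert, Finset.mem_singleton] at hk
      omega
    simp only [hh, hpik k h2, hepsk k h2, hC]
    ring
  have hsum : HasSum h (h 0 + h 1) := by
    have := hasSum_sum_of_ne_finset_zero (L := SummationFilter.unconditional ℕ) hzero
    rwa [Finset.sum_pair (by norm_num : (0 : ℕ) ≠ 1)] at this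
  have htot : HasSum (fun k : ℕ => h k + ψ ^ k * C) (h 0 + h 1 + (1 - ψ)⁻¹ * C) :=
    hsum.add geo
  have hfun : (fun k : ℕ => h k + ψ ^ k * C) = fun k : ℕ => pi k + eps k := by
    funext k; simp [hh]
  rw [hfun] at htot
  have hχlam : χ - lam ≠ 0 := sub_ne_zero.mpr (ne_of_gt hstab)
  have hD : ((1 : ℝ) - δ) * ((1 - lam) * χ) ≠ 0 :=
    mul_ne_zero hδ' (mul_ne_zero hlam' hχ0')
  have hinv : (1 - ψ)⁻¹ = (1 - lam) * χ / (χ - lam) := by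
    have h1 : 1 - ψ = (χ - lam) / ((1 - lam) * χ) := by
      rw [hψ]
      field_simp
      ring
    rw [h1, inv_div]
  have hterm0 : pi 0 = (χ - lam) * ((1 - lam) * χ) / ((1 - δ) * ((1 - lam) * χ)) := by
    rw [hpi0, div_eq_div_iff hδ' hD]
    ring
  have hterm1 : pi 1 + eps 1
      = (lam * (1 - δ * (1 - lam)) + lam * (1 - lam) * (1 - Γ)) * (χ - lam)
        / ((1 - δ) * ((1 - lam) * χ)) := by
    rw [hpi1, heps1, hpi0]
    field_simp
  have hterm2 : (1 - ψ)⁻¹ * C - C - ψ * C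
      = lam ^ 2 * (1 - Γ) / ((1 - δ) * ((1 - lam) * χ)) := by
    rw [hinv, hC, hpi0, hψ]
    field_simp
    ring
  have hsplit : h 0 + h 1 + (1 - ψ)⁻¹ * C
      = pi 0 + (pi 1 + eps 1) + ((1 - ψ)⁻¹ * C - C - ψ * C) := by
    simp only [hh, heps0, pow_zero, pow_one]
    ring
  have key : (χ - lam) * ((1 - lam) * χ)
      + (lam * (1 - δ * (1 - lam)) + lam * (1 - lam) * (1 - Γ)) * (χ - lam)
      + lam ^ 2 * (1 - Γ) = (1 - δ) * ((1 - lam) * χ) := by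
    rw [hχ]
    ring
  have hval : h 0 + h 1 + (1 - ψ)⁻¹ * C = 1 := by
    rw [hsplit, hterm0, hterm1, hterm2, ← add_div, ← add_div, key,
      div_self hD]
  rwa [hval] at htot
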